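/- Let (𝔤, ω) be a symplectic Lie algebra and consider the left symmetric product on 𝒟 := 𝔤 × 𝔤* given by (x,α)(y,β) := (xy + ad*_α y, αβ + ad*_x β). For u ∈ 𝒟 let R_u denote right multiplication v ↦ vu in 𝒟, and for y ∈ 𝔤 let R_y^𝔤 denote right multiplication x ↦ xy in 𝔤. Then for every y ∈ 𝔤 one has tr(R_{(y,0)}) = tr(R_y^𝔤), and for every β ∈ 𝔤* one has tr(R_{(0,β)}) = tr(R_{r(β)}^𝔤). -/

import Mathlib

open LinearMap

/-- The coadjoint action of `x : L` on the dual: `⟨coad x α, y⟩ = -⟨α, [x,y]⟩`. -/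
noncomputable def coad {L : Type*} [LieRing L] [LieAlgebra ℝ L]
    (x : L) (α : Module.Dual ℝ L) : Module.Dual ℝ L :=
  -(α ∘ₗ (LieAlgebra.ad ℝ L x))

/-- The product `(x,α)(y,β) = (xy + ad*_α y, αβ + ad*_x β)` on `𝒟 = 𝔤 × 𝔤*`. -/
noncomputable def dprod {L : Type*} [LieRing L] [LieAlgebra ℝ L]
    (p : L →ₗ[ℝ] L →ₗ[ℝ] L) (r : Module.Dual ℝ L →ₗ[ℝ] L)
    (cstar : Module.Dual ℝ L → L → L)
    (u v : L × Module.Dual ℝ L) : L × Module.Dual ℝ L :=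
  (p u.1 v.1 + cstar u.2 v.1, coad (r u.2) v.2 + coad u.1 v.2)

lemma trace_prod_decomp {M N : Type*} [AddCommGroup M] [Module ℝ M] [AddCommGroup N]
    [Module ℝ N] [FiniteDimensional ℝ M] [FiniteDimensional ℝ N]
    (R : (M × N) →ₗ[ℝ] (M × N)) :
    LinearMap.trace ℝ (M × N) R =
      LinearMap.trace ℝ M ((fst ℝ M N) ∘ₗ R ∘ₗ (inl ℝ M N)) +
      LinearMap.trace ℝ N ((snd ℝ M N) ∘ₗ R ∘ₗ (inr ℝ M N)) := by
  set A := (fst ℝ M N) ∘ₗ R ∘ₗ (inl ℝ M N) with hA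
  set B := (fst ℝ M N) ∘ₗ R ∘ₗ (inr ℝ M N) with hB
  set C := (snd ℝ M N) ∘ₗ R ∘ₗ (inl ℝ M N) with hC
  set D := (snd ℝ M N) ∘ₗ R ∘ₗ (inr ℝ M N) with hD
  have hR : R = (inl ℝ M N) ∘ₗ (A ∘ₗ (fst ℝ M N))
      + (inl ℝ M N) ∘ₗ (B ∘ₗ (snd ℝ M N))
      + (inr ℝ M N) ∘ₗ (C ∘ₗ (fst ℝ M N))
      + (inr ℝ M N) ∘ₗ (D ∘ₗ (snd ℝ M N)) := by
    apply LinearMap.ext; intro v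
    have : v = (v.1, (0 : N)) + ((0 : M), v.2) := by simp
    rw [this, map_add, map_add]
    simp [hA, hB, hC, hD, Prod.ext_iff, Prod.mk_zero_zero]
  have h1 : (fst ℝ M N) ∘ₗ (inl ℝ M N) = LinearMap.id := by ext; simp
  have h2 : (snd ℝ M N) ∘ₗ (inl ℝ M N) = 0 := by ext; simp
  have h3 : (fst ℝ M N) ∘ₗ (inr ℝ M N) = 0 := by ext; simp
  have h4 : (snd ℝ M N) ∘ₗ (inr ℝ M N) = LinearMap.id := by ext; simp
  have t1 : LinearMap.trace ℝ (M × N) ((inl ℝ M N) ∘ₗ (A ∘ₗ (fst ℝ M N)))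
      = LinearMap.trace ℝ M A := by
    rw [trace_comp_comm' (A ∘ₗ (fst ℝ M N)) (inl ℝ M N), comp_assoc, h1, comp_id]
  have t2 : LinearMap.trace ℝ (M × N) ((inl ℝ M N) ∘ₗ (B ∘ₗ (snd ℝ M N))) = 0 := by
    rw [trace_comp_comm' (B ∘ₗ (snd ℝ M N)) (inl ℝ M N), comp_assoc, h2, comp_zero, map_zero]
  have t3 : LinearMap.trace ℝ (M × N) ((inr ℝ M N) ∘ₗ (C ∘ₗ (fst ℝ M N))) = 0 := by
    rw [trace_comp_comm' (C ∘ₗ (fst ℝ M N)) (inr ℝ M N), comp_assoc, h3, comp_zero, map_zero]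
  have t4 : LinearMap.trace ℝ (M × N) ((inr ℝ M N) ∘ₗ (D ∘ₗ (snd ℝ M N)))
      = LinearMap.trace ℝ N D := by
    rw [trace_comp_comm' (D ∘ₗ (snd ℝ M N)) (inr ℝ M N), comp_assoc, h4, comp_id]
  conv_lhs => rw [hR]
  rw [map_add, map_add, map_add, t1, t2, t3, t4]
  ring

/-- for the left symmetric product on `𝒟 = 𝔤 × 𝔤*` of a symplectic Lie
algebra, the right multiplication by `(y,0)` has the same trace as right multiplication
by `y` in `𝔤`, and right multiplication by `(0,β)` has the same trace as right
multiplication by `r β` in `𝔤`. -/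
theorem stmt14 {L : Type*} [LieRing L] [LieAlgebra ℝ L] [FiniteDimensional ℝ L]
    (ω : L →ₗ[ℝ] Module.Dual ℝ L)
    (hskew : ∀ x y : L, ω x y = - ω y x)
    (hclosed : ∀ x y z : L, ω ⁅x, y⁆ z + ω ⁅y, z⁆ x + ω ⁅z, x⁆ y = 0)
    (r : Module.Dual ℝ L →ₗ[ℝ] L)
    (hr1 : ∀ α : Module.Dual ℝ L, ω (r α) = α)
    (hr2 : ∀ x : L, r (ω x) = x)
    (p : L →ₗ[ℝ] L →ₗ[ℝ] L)
    (hp : ∀ x y z : L, ω (p x y) z = -(ω y ⁅x, z⁆))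
    (cstar : Module.Dual ℝ L → L → L)
    (hcstar : ∀ (α : Module.Dual ℝ L) (x : L) (β : Module.Dual ℝ L),
      β (cstar α x) = -((ω ⁅r α, r β⁆) x)) :
    (∀ (y : L)
      (R : (L × Module.Dual ℝ L) →ₗ[ℝ] (L × Module.Dual ℝ L)) (Rg : L →ₗ[ℝ] L),
      (∀ v : L × Module.Dual ℝ L, R v = dprod p r cstar v (y, 0)) →
      (∀ x : L, Rg x = p x y) →
      LinearMap.trace ℝ (L × Module.Dual ℝ L) R = LinearMap.trace ℝ L Rg) ∧
    (∀ (β : Module.Dual ℝ L)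
      (R : (L × Module.Dual ℝ L) →ₗ[ℝ] (L × Module.Dual ℝ L)) (Rg : L →ₗ[ℝ] L),
      (∀ v : L × Module.Dual ℝ L, R v = dprod p r cstar v (0, β)) →
      (∀ x : L, Rg x = p x (r β)) →
      LinearMap.trace ℝ (L × Module.Dual ℝ L) R = LinearMap.trace ℝ L Rg) := by
  have hcstar0 : ∀ z : L, cstar 0 z = 0 := by
    intro z
    rw [← Module.forall_dual_apply_eq_zero_iff ℝ (cstar 0 z)]
    intro γ
    rw [hcstar]
    simp
  constructor
  · intro y R Rg hRdef hRgdef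
    rw [trace_prod_decomp R]
    have hA : (fst ℝ L (Module.Dual ℝ L)) ∘ₗ R ∘ₗ (inl ℝ L (Module.Dual ℝ L)) = Rg := by
      apply LinearMap.ext; intro x
      simp only [comp_apply, inl_apply, fst_apply, hRdef, hRgdef, dprod]
      rw [hcstar0]
      simp
    have hD : (snd ℝ L (Module.Dual ℝ L)) ∘ₗ R ∘ₗ (inr ℝ L (Module.Dual ℝ L)) = 0 := by
      apply LinearMap.ext; intro α
      simp only [comp_apply, inr_apply, snd_apply, hRdef, dprod, LinearMap.zero_apply]
      simp [coad]
    rw [hA, hD, map_zero, add_zero]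
  · intro β R Rg hRdef hRgdef
    rw [trace_prod_decomp R]
    -- S x = coad x β
    set S : L →ₗ[ℝ] Module.Dual ℝ L :=
      -((LinearMap.llcomp ℝ L L ℝ β) ∘ₗ (LieAlgebra.ad ℝ L : L →ₗ[ℝ] Module.End ℝ L))
      with hS
    have hSx : ∀ x : L, S x = coad x β := by intro x; rfl
    have hA : (fst ℝ L (Module.Dual ℝ L)) ∘ₗ R ∘ₗ (inl ℝ L (Module.Dual ℝ L)) = 0 := by
      apply LinearMap.ext; intro x
      simp only [comp_apply, inl_apply, fst_apply, hRdef, dprod, LinearMap.zero_apply]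
      rw [hcstar0]
      simp
    have hD : (snd ℝ L (Module.Dual ℝ L)) ∘ₗ R ∘ₗ (inr ℝ L (Module.Dual ℝ L)) = S ∘ₗ r := by
      apply LinearMap.ext; intro α
      simp only [comp_apply, inr_apply, snd_apply, hRdef, dprod]
      rw [hSx]
      simp [coad]
    have hRg : Rg = r ∘ₗ S := by
      apply LinearMap.ext; intro x
      rw [comp_apply, hRgdef]
      have hω : ω (p x (r β)) = ω (r (S x)) := by
        rw [hr1]
        apply LinearMap.ext; intro z
        rw [hp, hr1, hSx]
        simp [coad, LieAlgebra.ad_apply]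
      have := congrArg r hω
      rwa [hr2, hr2] at this
    rw [hA, hD, map_zero, zero_add, hRg, trace_comp_comm']
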